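/- Let n ≥ 1 and set N = 2n. The diagonal matrix J = diag(q^{ρ_1}, …, q^{ρ_N}) satisfies the reflection equation R J₁ R^{t₁} J₂ = J₂ R^{t₁} J₁ R with respect to the R-matrix of Sp(2n). (This is the constant solution (4.2) used for the quantum symmetric space of type (4), Sp(2n)/U(n).) -/

import Mathlib

open Matrix

noncomputable section

/-- Kronecker product of two `N × N` matrices, with `(eᵢⱼ ⊗ eₖₗ)` having
`((i,k),(j,l))`-entry `1`. -/
def kron {N : ℕ} (A B : Matrix (Fin N) (Fin N) ℂ) :
    Matrix (Fin N × Fin N) (Fin N × Fin N) ℂ :=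
  fun p r => A p.1 r.1 * B p.2 r.2

/-- Partial transpose in the first tensor factor. -/
def ptransp {N : ℕ} (R : Matrix (Fin N × Fin N) (Fin N × Fin N) ℂ) :
    Matrix (Fin N × Fin N) (Fin N × Fin N) ℂ :=
  fun p r => R (r.1, p.2) (p.1, r.2)

/-- The reflection equation `R J₁ R^{t₁} J₂ = J₂ R^{t₁} J₁ R`. -/
def ReflectionEq {N : ℕ} (R : Matrix (Fin N × Fin N) (Fin N × Fin N) ℂ)
    (J : Matrix (Fin N) (Fin N) ℂ) : Prop :=
  R * kron J 1 * ptransp R * kron 1 J = kron 1 J * ptransp R * kron J 1 * R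

/-- Matrix units. -/
def e {N : ℕ} (i j : Fin N) : Matrix (Fin N) (Fin N) ℂ :=
  Matrix.single i j 1

/-- `κ_j` for `Sp(2n)` (0-based index): `κ_j = 1` if `j ≤ n` (1-based), `κ_j = −1` otherwise. -/
def kappaSp (n : ℕ) (j : Fin (2 * n)) : ℝ := if (j : ℕ) < n then 1 else -1

/-- `ρ_j` for `Sp(2n)` (here `j : Fin (2n)` is the 0-based version of the 1-based index `j+1`):
`ρ_j = n − j + 1` if `j ≤ n` and `ρ_j = n − j` if `j > n`. -/
def rhoSp (n : ℕ) (j : Fin (2 * n)) : ℝ :=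
  if (j : ℕ) < n then (n : ℝ) - (j : ℕ) else (n : ℝ) - ((j : ℕ) + 1)

/-- The R-matrix of `Sp(2n)`:
`R = Σ_{i,j} q^{δ_{ij} − δ_{i,j'}} e_{ii} ⊗ e_{jj}
   + (q − q⁻¹) Σ_{j<i} ( e_{ij} ⊗ e_{ji} − κ_i κ_j q^{ρ_i − ρ_j} e_{ij} ⊗ e_{i',j'} )`,
where `j' = N+1-j` corresponds to `Fin.rev`. -/
def RmatSp (q : ℝ) (n : ℕ) :
    Matrix (Fin (2 * n) × Fin (2 * n)) (Fin (2 * n) × Fin (2 * n)) ℂ :=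
  (∑ i : Fin (2 * n), ∑ j : Fin (2 * n),
      ((q ^ ((if i = j then (1 : ℝ) else 0) - (if i = Fin.rev j then (1 : ℝ) else 0)) : ℝ) : ℂ)
        • kron (e i i) (e j j))
    + ((q : ℂ) - (q : ℂ)⁻¹) •
      ∑ i : Fin (2 * n), ∑ j : Fin (2 * n),
        if (j : ℕ) < (i : ℕ) then
          kron (e i j) (e j i)
            - ((kappaSp n i * kappaSp n j * q ^ (rhoSp n i - rhoSp n j) : ℝ) : ℂ)
                • kron (e i j) (e (Fin.rev i) (Fin.rev j))
        else 0

variable {N : ℕ}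

lemma kron_mul (A B C D : Matrix (Fin N) (Fin N) ℂ) :
    kron A B * kron C D = kron (A * C) (B * D) := by
  ext ⟨i, k⟩ ⟨j, l⟩
  simp only [kron, mul_apply, Fintype.sum_prod_type]
  rw [Finset.sum_mul_sum]
  exact Finset.sum_congr rfl fun s _ => Finset.sum_congr rfl fun t _ => by ring

lemma kron_smul_left (x : ℂ) (A B : Matrix (Fin N) (Fin N) ℂ) :
    kron (x • A) B = x • kron A B := by
  ext ⟨i, k⟩ ⟨j, l⟩
  simp [kron, Matrix.smul_apply]
  ring

lemma kron_smul_right (x : ℂ) (A B : Matrix (Fin N) (Fin N) ℂ) :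
    kron A (x • B) = x • kron A B := by
  ext ⟨i, k⟩ ⟨j, l⟩
  simp [kron, Matrix.smul_apply]
  ring

lemma kron_zero_left (B : Matrix (Fin N) (Fin N) ℂ) : kron (0 : Matrix (Fin N) (Fin N) ℂ) B = 0 := by
  ext ⟨i, k⟩ ⟨j, l⟩; simp [kron]

lemma kron_zero_right (A : Matrix (Fin N) (Fin N) ℂ) : kron A (0 : Matrix (Fin N) (Fin N) ℂ) = 0 := by
  ext ⟨i, k⟩ ⟨j, l⟩; simp [kron]

lemma e_mul (a b p r : Fin N) : e a b * e p r = if b = p then e a r else 0 := by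
  split_ifs with h
  · subst h; simpa [e] using Matrix.single_mul_single_same (c := (1:ℂ)) a b r 1
  · exact Matrix.single_mul_single_of_ne (c := (1:ℂ)) a b p h 1

lemma e_mul_diag (a b : Fin N) (gd : Fin N → ℂ) :
    e a b * Matrix.diagonal gd = gd b • e a b := by
  ext i j
  simp only [Matrix.mul_diagonal, Matrix.smul_apply, e, Matrix.single, Matrix.of_apply,
    smul_eq_mul]
  split_ifs with h
  · rw [h.2]; ring
  · ring

lemma diag_mul_e (a b : Fin N) (gd : Fin N → ℂ) :
    Matrix.diagonal gd * e a b = gd a • e a b := by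
  ext i j
  simp only [Matrix.diagonal_mul, Matrix.smul_apply, e, Matrix.single, Matrix.of_apply,
    smul_eq_mul]
  split_ifs with h
  · rw [h.1]
  · ring

lemma kron_e_mul_kron_e (a b c f p r s t : Fin N) :
    kron (e a b) (e c f) * kron (e p r) (e s t) =
      if b = p ∧ f = s then kron (e a r) (e c t) else 0 := by
  rw [kron_mul, e_mul, e_mul]
  split_ifs with h1 h2 h2 <;>
    simp_all [kron_zero_left, kron_zero_right]

lemma kron_e_J1_right (a b c f : Fin N) (gd : Fin N → ℂ) :
    kron (e a b) (e c f) * kron (Matrix.diagonal gd) 1 = gd b • kron (e a b) (e c f) := by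
  rw [kron_mul, mul_one, e_mul_diag, kron_smul_left]

lemma kron_e_J2_right (a b c f : Fin N) (gd : Fin N → ℂ) :
    kron (e a b) (e c f) * kron 1 (Matrix.diagonal gd) = gd f • kron (e a b) (e c f) := by
  rw [kron_mul, mul_one, e_mul_diag, kron_smul_right]

lemma kron_e_J1_left (a b c f : Fin N) (gd : Fin N → ℂ) :
    kron (Matrix.diagonal gd) 1 * kron (e a b) (e c f) = gd a • kron (e a b) (e c f) := by
  rw [kron_mul, one_mul, diag_mul_e, kron_smul_left]

lemma kron_e_J2_left (a b c f : Fin N) (gd : Fin N → ℂ) :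
    kron 1 (Matrix.diagonal gd) * kron (e a b) (e c f) = gd c • kron (e a b) (e c f) := by
  rw [kron_mul, one_mul, diag_mul_e, kron_smul_right]


lemma ptransp_add (A B : Matrix (Fin N × Fin N) (Fin N × Fin N) ℂ) :
    ptransp (A + B) = ptransp A + ptransp B := rfl

lemma ptransp_sub (A B : Matrix (Fin N × Fin N) (Fin N × Fin N) ℂ) :
    ptransp (A - B) = ptransp A - ptransp B := rfl

lemma ptransp_smul (x : ℂ) (A : Matrix (Fin N × Fin N) (Fin N × Fin N) ℂ) :
    ptransp (x • A) = x • ptransp A := rfl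

lemma ptransp_sum {ι : Type*} (s : Finset ι) (f : ι → Matrix (Fin N × Fin N) (Fin N × Fin N) ℂ) :
    ptransp (∑ i ∈ s, f i) = ∑ i ∈ s, ptransp (f i) := by
  ext ⟨i, k⟩ ⟨j, l⟩
  simp [ptransp, Matrix.sum_apply]

lemma ptransp_kron_e (a b : Fin N) (B : Matrix (Fin N) (Fin N) ℂ) :
    ptransp (kron (e a b) B) = kron (e b a) B := by
  ext ⟨i, k⟩ ⟨j, l⟩
  simp only [ptransp, kron]
  congr 1
  simp [e, Matrix.single, Matrix.of_apply, and_comm]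

/-- term-level four-factor product -/
lemma term4 (x y : ℂ) (a b c f p r s t : Fin N) (gd : Fin N → ℂ) :
    x • kron (e a b) (e c f) * kron (Matrix.diagonal gd) 1 * (y • kron (e p r) (e s t)) *
      kron 1 (Matrix.diagonal gd) =
    if b = p ∧ f = s then (x * gd b * y * gd t) • kron (e a r) (e c t) else 0 := by
  simp only [smul_mul_assoc, mul_smul_comm, smul_smul, kron_e_J1_right, kron_e_J2_right,
    kron_e_mul_kron_e, mul_ite, mul_zero, smul_ite, smul_zero]
  split_ifs with h
  · rw [smul_mul_assoc, kron_e_J2_right, smul_smul]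
    congr 1
    ring
  · simp

lemma term4' (x y : ℂ) (a b c f p r s t : Fin N) (gd : Fin N → ℂ) :
    kron 1 (Matrix.diagonal gd) * (y • kron (e p r) (e s t)) * kron (Matrix.diagonal gd) 1 *
      (x • kron (e a b) (e c f)) =
    if r = a ∧ t = c then (gd s * y * gd r * x) • kron (e p b) (e s f) else 0 := by
  simp only [smul_mul_assoc, mul_smul_comm, smul_smul, kron_e_J2_left, kron_e_J1_right,
    kron_e_mul_kron_e, mul_ite, mul_zero, smul_ite, smul_zero]
  split_ifs with h
  · congr 1
    ring
  · simp

/-- generic product of two unit-sums sandwiched with the diagonals -/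
lemma GG (x y : Fin N → Fin N → ℂ) (a b c f p r s t : Fin N → Fin N → Fin N) (gd : Fin N → ℂ) :
    (∑ i : Fin N, ∑ j : Fin N, x i j • kron (e (a i j) (b i j)) (e (c i j) (f i j))) *
      kron (Matrix.diagonal gd) 1 *
      (∑ k : Fin N, ∑ l : Fin N, y k l • kron (e (p k l) (r k l)) (e (s k l) (t k l))) *
      kron 1 (Matrix.diagonal gd) =
    ∑ k : Fin N, ∑ l : Fin N, ∑ i : Fin N, ∑ j : Fin N,
      if b i j = p k l ∧ f i j = s k l then
        (x i j * gd (b i j) * y k l * gd (t k l)) • kron (e (a i j) (r k l)) (e (c i j) (t k l))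
      else 0 := by
  simp only [Finset.sum_mul, Finset.mul_sum, term4]

lemma GG' (x y : Fin N → Fin N → ℂ) (a b c f p r s t : Fin N → Fin N → Fin N) (gd : Fin N → ℂ) :
    kron 1 (Matrix.diagonal gd) *
      (∑ k : Fin N, ∑ l : Fin N, y k l • kron (e (p k l) (r k l)) (e (s k l) (t k l))) *
      kron (Matrix.diagonal gd) 1 *
      (∑ i : Fin N, ∑ j : Fin N, x i j • kron (e (a i j) (b i j)) (e (c i j) (f i j))) =
    ∑ i : Fin N, ∑ j : Fin N, ∑ k : Fin N, ∑ l : Fin N,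
      if r k l = a i j ∧ t k l = c i j then
        (gd (s k l) * y k l * gd (r k l) * x i j) • kron (e (p k l) (b i j)) (e (s k l) (f i j))
      else 0 := by
  simp only [Finset.sum_mul, Finset.mul_sum, term4']

lemma sum_collapse1 {M : Type*} [AddCommMonoid M] (F : Fin N → M) (k₀ : Fin N)
    (h : ∀ k, F k ≠ 0 → k = k₀) : ∑ k : Fin N, F k = F k₀ :=
  Fintype.sum_eq_single k₀ fun x hx => by
    by_contra h'
    exact hx (h x h')

lemma sum4_swap {M : Type*} [AddCommMonoid M] (F : Fin N → Fin N → Fin N → Fin N → M) :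
    (∑ k : Fin N, ∑ l : Fin N, ∑ i : Fin N, ∑ j : Fin N, F k l i j)
      = ∑ i : Fin N, ∑ j : Fin N, ∑ k : Fin N, ∑ l : Fin N, F k l i j :=
  calc (∑ k : Fin N, ∑ l : Fin N, ∑ i : Fin N, ∑ j : Fin N, F k l i j)
      = ∑ k : Fin N, ∑ i : Fin N, ∑ l : Fin N, ∑ j : Fin N, F k l i j :=
        Finset.sum_congr rfl fun k _ => Finset.sum_comm
    _ = ∑ i : Fin N, ∑ k : Fin N, ∑ l : Fin N, ∑ j : Fin N, F k l i j := Finset.sum_comm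
    _ = ∑ i : Fin N, ∑ k : Fin N, ∑ j : Fin N, ∑ l : Fin N, F k l i j :=
        Finset.sum_congr rfl fun i _ => Finset.sum_congr rfl fun k _ => Finset.sum_comm
    _ = ∑ i : Fin N, ∑ j : Fin N, ∑ k : Fin N, ∑ l : Fin N, F k l i j :=
        Finset.sum_congr rfl fun i _ => Finset.sum_comm

lemma sum_rev {M : Type*} [AddCommMonoid M] (F : Fin N → M) :
    ∑ i : Fin N, F i.rev = ∑ i : Fin N, F i :=
  Fintype.sum_bijective Fin.rev Fin.rev_bijective _ _ fun i => rfl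

lemma rev_lt_rev {m : ℕ} (a b : Fin m) : (a.rev : ℕ) < (b.rev : ℕ) ↔ (b : ℕ) < (a : ℕ) := by
  rw [Fin.val_rev, Fin.val_rev]
  have := a.isLt; have := b.isLt
  omega

lemma lt_rev_comm {m : ℕ} (a b : Fin m) : (a : ℕ) < (b.rev : ℕ) ↔ (b : ℕ) < (a.rev : ℕ) := by
  rw [Fin.val_rev, Fin.val_rev]
  have := a.isLt; have := b.isLt
  omega

lemma rev_lt_comm {m : ℕ} (a b : Fin m) : (a.rev : ℕ) < (b : ℕ) ↔ (b.rev : ℕ) < (a : ℕ) := by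
  rw [Fin.val_rev, Fin.val_rev]
  have := a.isLt; have := b.isLt
  omega

lemma rev_ne_self {n : ℕ} (x : Fin (2 * n)) : ¬ x = x.rev := by
  intro h
  have h1 : (x : ℕ) = (x.rev : ℕ) := by rw [← h]
  rw [Fin.val_rev] at h1
  have := x.isLt
  omega

lemma rho_rev (n : ℕ) (j : Fin (2 * n)) : rhoSp n j.rev = - rhoSp n j := by
  have hj : (j : ℕ) < 2 * n := j.isLt
  have hv : (j.rev : ℕ) = 2 * n - ((j : ℕ) + 1) := Fin.val_rev j
  have h3 : ((j.rev : ℕ) : ℝ) = 2 * (n : ℝ) - ((j : ℕ) + 1) := by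
    rw [hv, Nat.cast_sub (by omega : (j : ℕ) + 1 ≤ 2 * n)]
    push_cast
    ring
  unfold rhoSp
  split_ifs with h1 h2 h2
  · omega
  · rw [h3]; ring
  · rw [h3]; ring
  · omega

lemma kappa_rev (n : ℕ) (j : Fin (2 * n)) : kappaSp n j.rev = - kappaSp n j := by
  have hj : (j : ℕ) < 2 * n := j.isLt
  have hv : (j.rev : ℕ) = 2 * n - ((j : ℕ) + 1) := Fin.val_rev j
  unfold kappaSp
  split_ifs with h1 h2 h2
  · omega
  · norm_num
  · norm_num
  · omega

section Main

variable (q : ℝ) (n : ℕ)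

def gdfun : Fin (2 * n) → ℂ := fun j : Fin (2 * n) => ((q ^ (rhoSp n j) : ℝ) : ℂ)

def ccf (i j : Fin (2 * n)) : ℂ :=
  ((kappaSp n i * kappaSp n j * q ^ (rhoSp n i - rhoSp n j) : ℝ) : ℂ)

def Ac (i j : Fin (2 * n)) : ℂ :=
  ((q ^ ((if i = j then (1 : ℝ) else 0) - (if i = Fin.rev j then (1 : ℝ) else 0)) : ℝ) : ℂ)

def tf (i j : Fin (2 * n)) : ℂ := if (j : ℕ) < (i : ℕ) then 1 else 0

def gf (i j : Fin (2 * n)) : ℂ := if (j : ℕ) < (i : ℕ) then ccf q n i j else 0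

lemma g_rev (hq : 0 < q) (j : Fin (2 * n)) : gdfun q n j * gdfun q n j.rev = 1 := by
  unfold gdfun
  rw [← Complex.ofReal_mul, ← Real.rpow_add hq]
  have h : rhoSp n j + rhoSp n j.rev = 0 := by rw [rho_rev]; ring
  rw [h, Real.rpow_zero, Complex.ofReal_one]

lemma Ac_self (x : Fin (2 * n)) : Ac q n x x = ((q ^ ((1 : ℝ) - 0) : ℝ) : ℂ) := by
  unfold Ac
  rw [if_pos rfl, if_neg (rev_ne_self x)]

lemma Ac_rev_self (x : Fin (2 * n)) : Ac q n x x.rev = ((q ^ ((0 : ℝ) - 1) : ℝ) : ℂ) := by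
  unfold Ac
  rw [if_neg (rev_ne_self x), if_pos (Fin.rev_rev x).symm]

lemma Ac_symm (i j : Fin (2 * n)) : Ac q n i j = Ac q n j i := by
  by_cases h1 : i = j
  · subst h1; rfl
  · have h1' : ¬ j = i := fun h => h1 h.symm
    by_cases h2 : i = j.rev
    · have h2' : j = i.rev := by rw [h2, Fin.rev_rev]
      unfold Ac
      rw [if_neg h1, if_pos h2, if_neg h1', if_pos h2']
    · have h2' : ¬ j = i.rev := fun h => h2 (by rw [h, Fin.rev_rev])
      unfold Ac
      rw [if_neg h1, if_neg h2, if_neg h1', if_neg h2']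

lemma Ac_cross (i j : Fin (2 * n)) : Ac q n j i.rev = Ac q n i j.rev := by
  unfold Ac
  have e1 : (j = i.rev) = (i = j.rev) :=
    propext ⟨fun h => by rw [h, Fin.rev_rev], fun h => by rw [h, Fin.rev_rev]⟩
  have e2 : (j = i.rev.rev) = (i = j.rev.rev) := by
    rw [Fin.rev_rev, Fin.rev_rev]; exact propext eq_comm
  simp only [e1, e2]

lemma ccf_revrev (k l : Fin (2 * n)) : ccf q n l.rev k.rev = ccf q n k l := by
  unfold ccf
  rw [kappa_rev, kappa_rev, rho_rev, rho_rev,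
    show -rhoSp n l - -rhoSp n k = rhoSp n k - rhoSp n l by ring]
  congr 1
  ring

lemma gf_revrev (k l : Fin (2 * n)) : gf q n l.rev k.rev = gf q n k l := by
  unfold gf
  exact if_congr (rev_lt_rev k l) (ccf_revrev q n k l) rfl

lemma tf_swap (k l : Fin (2 * n)) : tf n k.rev l = tf n l.rev k := by
  unfold tf
  exact if_congr (lt_rev_comm l k) rfl rfl

def DD : Matrix (Fin (2 * n) × Fin (2 * n)) (Fin (2 * n) × Fin (2 * n)) ℂ :=
  ∑ i : Fin (2 * n), ∑ j : Fin (2 * n), Ac q n i j • kron (e i i) (e j j)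

def TT : Matrix (Fin (2 * n) × Fin (2 * n)) (Fin (2 * n) × Fin (2 * n)) ℂ :=
  ∑ i : Fin (2 * n), ∑ j : Fin (2 * n), tf n i j • kron (e i j) (e j i)

def CC : Matrix (Fin (2 * n) × Fin (2 * n)) (Fin (2 * n) × Fin (2 * n)) ℂ :=
  ∑ i : Fin (2 * n), ∑ j : Fin (2 * n), gf q n i j • kron (e i j) (e i.rev j.rev)

def TTp : Matrix (Fin (2 * n) × Fin (2 * n)) (Fin (2 * n) × Fin (2 * n)) ℂ :=
  ∑ i : Fin (2 * n), ∑ j : Fin (2 * n), tf n i j • kron (e j i) (e j i)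

def CCp : Matrix (Fin (2 * n) × Fin (2 * n)) (Fin (2 * n) × Fin (2 * n)) ℂ :=
  ∑ i : Fin (2 * n), ∑ j : Fin (2 * n), gf q n i j • kron (e j i) (e i.rev j.rev)

lemma Rdecomp :
    RmatSp q n = DD q n + ((q : ℂ) - (q : ℂ)⁻¹) • TT n - ((q : ℂ) - (q : ℂ)⁻¹) • CC q n := by
  have h : (∑ i : Fin (2 * n), ∑ j : Fin (2 * n),
        if (j : ℕ) < (i : ℕ) then
          kron (e i j) (e j i)
            - ((kappaSp n i * kappaSp n j * q ^ (rhoSp n i - rhoSp n j) : ℝ) : ℂ)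
                • kron (e i j) (e (Fin.rev i) (Fin.rev j))
        else 0) = TT n - CC q n := by
    rw [TT, CC, ← Finset.sum_sub_distrib]
    refine Finset.sum_congr rfl fun i _ => ?_
    rw [← Finset.sum_sub_distrib]
    refine Finset.sum_congr rfl fun j _ => ?_
    simp only [tf, gf, ccf]
    split_ifs with hij
    · rw [one_smul]
    · simp
  rw [RmatSp, h, smul_sub, DD]
  simp only [Ac]
  rw [add_sub_assoc]

lemma Rtdecomp :
    ptransp (RmatSp q n)
      = DD q n + ((q : ℂ) - (q : ℂ)⁻¹) • TTp n - ((q : ℂ) - (q : ℂ)⁻¹) • CCp q n := by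
  rw [Rdecomp, ptransp_sub, ptransp_add, ptransp_smul, ptransp_smul]
  have hD : ptransp (DD q n) = DD q n := by
    rw [DD, ptransp_sum]
    refine Finset.sum_congr rfl fun i _ => ?_
    rw [ptransp_sum]
    exact Finset.sum_congr rfl fun j _ => by rw [ptransp_smul, ptransp_kron_e]
  have hT : ptransp (TT n) = TTp n := by
    rw [TT, TTp, ptransp_sum]
    refine Finset.sum_congr rfl fun i _ => ?_
    rw [ptransp_sum]
    exact Finset.sum_congr rfl fun j _ => by rw [ptransp_smul, ptransp_kron_e]
  have hC : ptransp (CC q n) = CCp q n := by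
    rw [CC, CCp, ptransp_sum]
    refine Finset.sum_congr rfl fun i _ => ?_
    rw [ptransp_sum]
    exact Finset.sum_congr rfl fun j _ => by rw [ptransp_smul, ptransp_kron_e]
  rw [hD, hT, hC]

lemma P1 :
    DD q n * kron (Matrix.diagonal (gdfun q n)) 1 * DD q n * kron 1 (Matrix.diagonal (gdfun q n))
      = kron 1 (Matrix.diagonal (gdfun q n)) * DD q n * kron (Matrix.diagonal (gdfun q n)) 1
          * DD q n := by
  rw [DD, GG, GG']
  refine Finset.sum_congr rfl fun k _ => Finset.sum_congr rfl fun l _ => ?_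
  refine Eq.trans (Fintype.sum_eq_single k fun i hi =>
    Finset.sum_eq_zero fun j _ => if_neg fun hc => hi hc.1) ?_
  refine Eq.trans (Fintype.sum_eq_single l fun j hj => if_neg fun hc => hj hc.2) ?_
  refine Eq.trans (if_pos ⟨rfl, rfl⟩) ?_
  refine Eq.trans ?_ (Eq.symm (Fintype.sum_eq_single k fun i hi =>
    Finset.sum_eq_zero fun j _ => if_neg fun hc => hi hc.1))
  refine Eq.trans ?_ (Eq.symm (Fintype.sum_eq_single l fun j hj => if_neg fun hc => hj hc.2))
  refine Eq.trans ?_ (Eq.symm (if_pos ⟨rfl, rfl⟩))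
  congr 1
  ring

lemma P2 :
    DD q n * kron (Matrix.diagonal (gdfun q n)) 1 * TTp n * kron 1 (Matrix.diagonal (gdfun q n))
      = kron 1 (Matrix.diagonal (gdfun q n)) * TTp n * kron (Matrix.diagonal (gdfun q n)) 1
          * DD q n := by
  rw [DD, TTp, GG, GG']
  conv_rhs => rw [sum4_swap (N := 2 * n)]
  refine Finset.sum_congr rfl fun k _ => Finset.sum_congr rfl fun l _ => ?_
  refine Eq.trans (Fintype.sum_eq_single l fun i hi =>
    Finset.sum_eq_zero fun j _ => if_neg fun hc => hi hc.1) ?_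
  refine Eq.trans (Fintype.sum_eq_single l fun j hj => if_neg fun hc => hj hc.2) ?_
  refine Eq.trans (if_pos ⟨rfl, rfl⟩) ?_
  refine Eq.trans ?_ (Eq.symm (Fintype.sum_eq_single k fun i hi =>
    Finset.sum_eq_zero fun j _ => if_neg fun hc => hi hc.1.symm))
  refine Eq.trans ?_ (Eq.symm (Fintype.sum_eq_single k fun j hj => if_neg fun hc => hj hc.2.symm))
  refine Eq.trans ?_ (Eq.symm (if_pos ⟨rfl, rfl⟩))
  rw [Ac_self, Ac_self]
  congr 1
  ring

lemma P3 :
    TT n * kron (Matrix.diagonal (gdfun q n)) 1 * DD q n * kron 1 (Matrix.diagonal (gdfun q n))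
      = kron 1 (Matrix.diagonal (gdfun q n)) * DD q n * kron (Matrix.diagonal (gdfun q n)) 1
          * TT n := by
  rw [TT, DD, GG, GG']
  rw [Finset.sum_comm]
  refine Finset.sum_congr rfl fun l _ => Finset.sum_congr rfl fun k _ => ?_
  refine Eq.trans (Fintype.sum_eq_single l fun i hi =>
    Finset.sum_eq_zero fun j _ => if_neg fun hc => hi hc.2) ?_
  refine Eq.trans (Fintype.sum_eq_single k fun j hj => if_neg fun hc => hj hc.1) ?_
  refine Eq.trans (if_pos ⟨rfl, rfl⟩) ?_
  refine Eq.trans ?_ (Eq.symm (Fintype.sum_eq_single l fun i hi =>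
    Finset.sum_eq_zero fun j _ => if_neg fun hc => hi hc.1))
  refine Eq.trans ?_ (Eq.symm (Fintype.sum_eq_single k fun j hj => if_neg fun hc => hj hc.2))
  refine Eq.trans ?_ (Eq.symm (if_pos ⟨rfl, rfl⟩))
  rw [Ac_symm]
  congr 1
  ring

lemma Ac_revrev (k l : Fin (2 * n)) : Ac q n l.rev k.rev = Ac q n k l := by
  unfold Ac
  have e1 : (l.rev = k.rev) = (k = l) := by rw [Fin.rev_inj]; exact propext eq_comm
  have e2 : (l.rev = k.rev.rev) = (k = l.rev) := by rw [Fin.rev_rev]; exact propext eq_comm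
  simp only [e1, e2]

lemma ccf_cross (i j : Fin (2 * n)) : ccf q n j i.rev = ccf q n i j.rev := by
  unfold ccf
  rw [kappa_rev, kappa_rev, rho_rev, rho_rev,
    show rhoSp n j - -rhoSp n i = rhoSp n i - -rhoSp n j by ring]
  congr 1
  ring

lemma gf_cross (i j : Fin (2 * n)) : gf q n j i.rev = gf q n i j.rev := by
  unfold gf
  exact if_congr (rev_lt_comm i j) (ccf_cross q n i j) rfl

lemma tf_revrev (i j : Fin (2 * n)) : tf n j.rev i.rev = tf n i j := by
  unfold tf
  exact if_congr (rev_lt_rev i j) rfl rfl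

lemma P4 (hq : 0 < q) :
    CC q n * kron (Matrix.diagonal (gdfun q n)) 1 * DD q n * kron 1 (Matrix.diagonal (gdfun q n))
      = kron 1 (Matrix.diagonal (gdfun q n)) * DD q n * kron (Matrix.diagonal (gdfun q n)) 1
          * CC q n := by
  rw [CC, DD, GG, GG']
  rw [sum4_swap (N := 2 * n)]
  refine Finset.sum_congr rfl fun i _ => Finset.sum_congr rfl fun j _ => ?_
  refine Eq.trans (Fintype.sum_eq_single j fun k hk =>
    Finset.sum_eq_zero fun l _ => if_neg fun hc => hk hc.1.symm) ?_
  refine Eq.trans (Fintype.sum_eq_single j.rev fun l hl => if_neg fun hc => hl hc.2.symm) ?_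
  refine Eq.trans (if_pos ⟨rfl, rfl⟩) ?_
  refine Eq.trans ?_ (Eq.symm (Fintype.sum_eq_single i fun k hk =>
    Finset.sum_eq_zero fun l _ => if_neg fun hc => hk hc.1))
  refine Eq.trans ?_ (Eq.symm (Fintype.sum_eq_single i.rev fun l hl => if_neg fun hc => hl hc.2))
  refine Eq.trans ?_ (Eq.symm (if_pos ⟨rfl, rfl⟩))
  rw [Ac_rev_self, Ac_rev_self]
  congr 1
  linear_combination (gf q n i j * ((q ^ ((0 : ℝ) - 1) : ℝ) : ℂ)) * g_rev q n hq j
    - (gf q n i j * ((q ^ ((0 : ℝ) - 1) : ℝ) : ℂ)) * g_rev q n hq i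

lemma P5 (hq : 0 < q) :
    DD q n * kron (Matrix.diagonal (gdfun q n)) 1 * CCp q n * kron 1 (Matrix.diagonal (gdfun q n))
      = kron 1 (Matrix.diagonal (gdfun q n)) * CCp q n * kron (Matrix.diagonal (gdfun q n)) 1
          * DD q n := by
  rw [DD, CCp, GG, GG']
  refine Finset.sum_congr rfl fun k _ => ?_
  refine Eq.trans (sum_rev _).symm ?_
  refine Finset.sum_congr rfl fun l _ => ?_
  refine Eq.trans (Fintype.sum_eq_single l.rev fun i hi =>
    Finset.sum_eq_zero fun j _ => if_neg fun hc => hi hc.1) ?_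
  refine Eq.trans (Fintype.sum_eq_single k.rev fun j hj => if_neg fun hc => hj hc.2) ?_
  refine Eq.trans (if_pos ⟨rfl, rfl⟩) ?_
  refine Eq.trans ?_ (Eq.symm (Fintype.sum_eq_single k fun k' hk' =>
    Finset.sum_eq_zero fun l' _ => if_neg fun hc => hk' hc.1))
  refine Eq.trans ?_ (Eq.symm (Fintype.sum_eq_single l.rev fun l' hl' =>
    if_neg fun hc => hl' (by rw [← hc.2, Fin.rev_rev])))
  refine Eq.trans ?_ (Eq.symm (if_pos ⟨rfl, Fin.rev_rev l⟩))
  simp only [Fin.rev_rev]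
  rw [Ac_revrev]
  congr 1
  linear_combination (Ac q n k l * gf q n k l.rev) * g_rev q n hq l
    - (Ac q n k l * gf q n k l.rev) * g_rev q n hq k

lemma P6 :
    TT n * kron (Matrix.diagonal (gdfun q n)) 1 * CCp q n * kron 1 (Matrix.diagonal (gdfun q n))
      = kron 1 (Matrix.diagonal (gdfun q n)) * CCp q n * kron (Matrix.diagonal (gdfun q n)) 1
          * TT n := by
  rw [TT, CCp, GG, GG']
  refine Eq.trans (Eq.trans Finset.sum_comm (sum_rev _).symm) ?_
  refine Finset.sum_congr rfl fun i _ => Finset.sum_congr rfl fun j _ => ?_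
  refine Eq.trans (Fintype.sum_eq_single j.rev fun i' hi' =>
    Finset.sum_eq_zero fun j' _ => if_neg fun hc => hi' hc.2) ?_
  refine Eq.trans (Fintype.sum_eq_single i.rev fun j' hj' => if_neg fun hc => hj' hc.1) ?_
  refine Eq.trans (if_pos ⟨rfl, rfl⟩) ?_
  refine Eq.trans ?_ (Eq.symm (Fintype.sum_eq_single i fun k' hk' =>
    Finset.sum_eq_zero fun l' _ => if_neg fun hc => hk' hc.1))
  refine Eq.trans ?_ (Eq.symm (Fintype.sum_eq_single j.rev fun l' hl' =>
    if_neg fun hc => hl' (by rw [← hc.2, Fin.rev_rev])))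
  refine Eq.trans ?_ (Eq.symm (if_pos ⟨rfl, Fin.rev_rev j⟩))
  simp only [Fin.rev_rev]
  rw [tf_revrev, gf_cross]
  congr 1
  ring

lemma Z1 :
    TT n * kron (Matrix.diagonal (gdfun q n)) 1 * TTp n * kron 1 (Matrix.diagonal (gdfun q n))
      = 0 := by
  rw [TT, TTp, GG]
  refine Finset.sum_eq_zero fun k _ => Finset.sum_eq_zero fun l _ =>
    Finset.sum_eq_zero fun i _ => Finset.sum_eq_zero fun j _ => ?_
  split_ifs with h
  · obtain ⟨h1, h2⟩ := h
    subst h1; subst h2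
    simp [tf]
  · rfl

lemma Z2 :
    CC q n * kron (Matrix.diagonal (gdfun q n)) 1 * TTp n * kron 1 (Matrix.diagonal (gdfun q n))
      = 0 := by
  rw [CC, TTp, GG]
  refine Finset.sum_eq_zero fun k _ => Finset.sum_eq_zero fun l _ =>
    Finset.sum_eq_zero fun i _ => Finset.sum_eq_zero fun j _ => ?_
  split_ifs with h
  · exact absurd (h.2.trans h.1.symm).symm (rev_ne_self j)
  · rfl

lemma Z3 :
    CC q n * kron (Matrix.diagonal (gdfun q n)) 1 * CCp q n * kron 1 (Matrix.diagonal (gdfun q n))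
      = 0 := by
  rw [CC, CCp, GG]
  refine Finset.sum_eq_zero fun k _ => Finset.sum_eq_zero fun l _ =>
    Finset.sum_eq_zero fun i _ => Finset.sum_eq_zero fun j _ => ?_
  split_ifs with h
  · obtain ⟨h1, h2⟩ := h
    have hk : k = j := (Fin.rev_inj.mp h2).symm
    subst hk; subst h1
    simp [gf]
  · rfl

lemma Z1' :
    kron 1 (Matrix.diagonal (gdfun q n)) * TTp n * kron (Matrix.diagonal (gdfun q n)) 1 * TT n
      = 0 := by
  rw [TT, TTp, GG']
  refine Finset.sum_eq_zero fun i _ => Finset.sum_eq_zero fun j _ =>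
    Finset.sum_eq_zero fun k _ => Finset.sum_eq_zero fun l _ => ?_
  split_ifs with h
  · obtain ⟨h1, h2⟩ := h
    have : i = j := h1.symm.trans h2
    subst this
    simp [tf]
  · rfl

lemma Z2' :
    kron 1 (Matrix.diagonal (gdfun q n)) * TTp n * kron (Matrix.diagonal (gdfun q n)) 1 * CC q n
      = 0 := by
  rw [CC, TTp, GG']
  refine Finset.sum_eq_zero fun i _ => Finset.sum_eq_zero fun j _ =>
    Finset.sum_eq_zero fun k _ => Finset.sum_eq_zero fun l _ => ?_
  split_ifs with h
  · exact absurd (h.1.symm.trans h.2) (rev_ne_self i)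
  · rfl

lemma Z3' :
    kron 1 (Matrix.diagonal (gdfun q n)) * CCp q n * kron (Matrix.diagonal (gdfun q n)) 1 * CC q n
      = 0 := by
  rw [CC, CCp, GG']
  refine Finset.sum_eq_zero fun i _ => Finset.sum_eq_zero fun j _ =>
    Finset.sum_eq_zero fun k _ => Finset.sum_eq_zero fun l _ => ?_
  split_ifs with h
  · obtain ⟨h1, h2⟩ := h
    have hl : l = i := Fin.rev_inj.mp h2
    subst hl; subst h1
    simp [gf]
  · rfl

end Main

/-- the diagonal matrix `J = diag(q^{ρ_1}, …, q^{ρ_N})` satisfies the reflection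
equation for the R-matrix of `Sp(2n)`. -/
theorem reflection_equation_diag_Sp (q : ℝ) (hq0 : 0 < q) (hq1 : q < 1)
    (n : ℕ) (hn : 1 ≤ n) :
    ReflectionEq (RmatSp q n)
      (Matrix.diagonal fun j : Fin (2 * n) => ((q ^ (rhoSp n j) : ℝ) : ℂ)) := by
  unfold ReflectionEq
  have hJ : (Matrix.diagonal fun j : Fin (2 * n) => ((q ^ (rhoSp n j) : ℝ) : ℂ))
      = Matrix.diagonal (gdfun q n) := rfl
  rw [hJ, Rtdecomp, Rdecomp]
  simp only [add_mul, sub_mul, mul_add, mul_sub, smul_mul_assoc, mul_smul_comm, smul_smul]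
  rw [P1, P2, P3, P4 q n hq0, P5 q n hq0, P6, Z1, Z2, Z3, Z1', Z2', Z3']
  simp only [smul_zero, add_zero, sub_zero, smul_add, smul_sub]
  abel
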